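/- For every positive integer m, m^2 − m − 1 ≤ S(m); that is, there exists a positive integer k with k·m − p_k ≥ m^2 − m − 1. -/

import Mathlib

/-- The k-th prime, 1-indexed: `nthPrime 1 = 2`. -/
noncomputable def nthPrime (k : ℕ) : ℕ := Nat.nth Nat.Prime (k - 1)

lemma nthPrime_eq_of_count {q k : ℕ} (hq : Nat.Prime q) (hc : Nat.count Nat.Prime q = k - 1) :
    nthPrime k = q := by
  rw [nthPrime, ← hc, Nat.nth_count hq]

lemma centralBinom_le_pow (n : ℕ) (hn : 0 < n) :
    Nat.centralBinom n ≤ (2 * n) ^ (Nat.count Nat.Prime (2 * n + 1)) := by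
  have h := Nat.prod_pow_factorization_centralBinom n
  rw [← h, Nat.count_eq_card_filter_range]
  calc (∏ p ∈ Finset.range (2 * n + 1), p ^ (Nat.centralBinom n).factorization p)
      = ∏ p ∈ (Finset.range (2 * n + 1)).filter Nat.Prime,
          p ^ (Nat.centralBinom n).factorization p := by
        rw [Finset.prod_filter_of_ne]
        intro p _ hne
        by_contra hp
        have : (Nat.centralBinom n).factorization p = 0 :=
          Nat.factorization_eq_zero_of_not_prime _ hp
        simp [this] at hne
    _ ≤ ∏ p ∈ (Finset.range (2 * n + 1)).filter Nat.Prime, (2 * n) := by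
        apply Finset.prod_le_prod (fun _ _ => Nat.zero_le _)
        intro p hp
        exact Nat.pow_factorization_choose_le (by omega)
    _ = (2 * n) ^ ((Finset.range (2 * n + 1)).filter Nat.Prime).card := by
        rw [Finset.prod_const]

/-- Chebyshev-type lower bound on prime counting. -/
lemma cheb (n s : ℕ) (hn : 0 < n) (hs : 2 * n + 1 ≤ 2 ^ s) :
    2 * n ≤ s * (Nat.count Nat.Prime (2 * n + 1) + 1) := by
  set K := Nat.count Nat.Prime (2 * n + 1) with hK
  have h1 : 4 ^ n ≤ (2 * n + 1) * Nat.centralBinom n :=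
    Nat.four_pow_le_two_mul_add_one_mul_central_binom n
  have h2 : (2 * n + 1) * Nat.centralBinom n ≤ 2 ^ s * (2 ^ s) ^ K := by
    apply Nat.mul_le_mul hs
    calc Nat.centralBinom n ≤ (2 * n) ^ K := centralBinom_le_pow n hn
      _ ≤ (2 ^ s) ^ K := Nat.pow_le_pow_left (by omega) K
  have h3 : 2 ^ (2 * n) ≤ 2 ^ (s * (K + 1)) := by
    calc 2 ^ (2 * n) = 4 ^ n := by rw [show (4:ℕ) = 2^2 by norm_num, ← pow_mul]
      _ ≤ 2 ^ s * (2 ^ s) ^ K := le_trans h1 h2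
      _ = 2 ^ (s * (K + 1)) := by rw [← pow_mul, ← pow_add]; ring_nf
  exact (Nat.pow_le_pow_iff_right (by norm_num)).mp h3

lemma cube_le_pow (m : ℕ) (hm : 14 ≤ m) : m ^ 3 ≤ 2 ^ (m - 2) := by
  induction m with
  | zero => omega
  | succ n ih =>
    rcases Nat.lt_or_ge n 14 with h | h
    · interval_cases n <;> omega
    · have h1 : n ^ 3 ≤ 2 ^ (n - 2) := ih h
      have h2 : (n + 1) ^ 3 ≤ 2 * n ^ 3 := by
        have hnn : n ≤ n ^ 2 := by nlinarith
        nlinarith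
      have h3 : (n + 1) - 2 = (n - 2) + 1 := by omega
      calc (n + 1) ^ 3 ≤ 2 * n ^ 3 := h2
        _ ≤ 2 * 2 ^ (n - 2) := by omega
        _ = 2 ^ ((n + 1) - 2) := by rw [h3]; ring

/-- the key existential -/
lemma key (m : ℕ) (hm : 0 < m) :
    ∃ k : ℕ, 0 < k ∧ (m : ℤ) ^ 2 - m - 1 ≤ (k : ℤ) * m - nthPrime k := by
  by_cases h27 : 27 ≤ m
  · -- Chebyshev case
    set n : ℕ := 2 ^ (m - 3) with hn
    have hx : 2 * n = 2 ^ (m - 2) := by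
      rw [hn, ← pow_succ']
      congr 1
      omega
    set K := Nat.count Nat.Prime (2 * n + 1) with hKdef
    have hs : 2 * n + 1 ≤ 2 ^ (m - 1) := by
      have : 2 ^ (m - 1) = 2 * 2 ^ (m - 2) := by
        rw [← pow_succ']; congr 1; omega
      have h1 : (1:ℕ) ≤ 2 ^ (m - 2) := Nat.one_le_two_pow
      omega
    have hcheb : 2 * n ≤ (m - 1) * (K + 1) := by
      exact cheb n (m - 1) (by rw [hn]; positivity) hs
    have hKpos : 0 < K := by
      have h3 : (3:ℕ) ≤ 2 * n + 1 := by
        have : 0 < n := by rw [hn]; positivity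
        omega
      have := Nat.count_monotone Nat.Prime h3
      have hc3 : Nat.count Nat.Prime 3 = 1 := by decide
      omega
    have hple : nthPrime K ≤ 2 * n := by
      have : K - 1 < Nat.count Nat.Prime (2 * n + 1) := by omega
      have := Nat.nth_lt_of_lt_count this
      rw [nthPrime]
      omega
    have hcube : m ^ 3 ≤ 2 * n := by rw [hx]; exact cube_le_pow m (by omega)
    refine ⟨K, hKpos, ?_⟩
    -- pass to ℤ
    have hm1 : (1:ℤ) ≤ (m:ℤ) - 1 := by
      have : (27:ℤ) ≤ m := by exact_mod_cast h27
      linarith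
    have hchebZ : (2 * n : ℤ) ≤ ((m:ℤ) - 1) * (K + 1) := by
      have := hcheb
      have hcast : ((m - 1 : ℕ) : ℤ) = (m:ℤ) - 1 := by
        have : (1:ℕ) ≤ m := hm
        push_cast [Nat.cast_sub this]
        ring
      exact_mod_cast by
        calc (2 * n : ℤ) ≤ ((m - 1 : ℕ) : ℤ) * (K + 1) := by exact_mod_cast hcheb
          _ = ((m:ℤ) - 1) * (K + 1) := by rw [hcast]
    have hcubeZ : (m:ℤ) ^ 3 ≤ (2 * n : ℤ) := by exact_mod_cast hcube
    have hpleZ : (nthPrime K : ℤ) ≤ (2 * n : ℤ) := by exact_mod_cast hple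
    have hmZ : (27:ℤ) ≤ (m:ℤ) := by exact_mod_cast h27
    nlinarith [hchebZ, hcubeZ, hpleZ, hmZ, sq_nonneg ((m:ℤ) - 1)]
  · -- small cases
    push_neg at h27
    have e1 : nthPrime 1 = 2 := nthPrime_eq_of_count (by norm_num) (by decide)
    have e4 : nthPrime 4 = 7 := nthPrime_eq_of_count (by norm_num) (by decide)
    have e9 : nthPrime 9 = 23 := nthPrime_eq_of_count (by norm_num) (by decide)
    have e30 : nthPrime 30 = 113 := nthPrime_eq_of_count (by norm_num) (by set_option maxRecDepth 100000 in decide)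
    rcases Nat.lt_or_ge m 5 with h5 | h5
    · interval_cases m
      · exact ⟨1, one_pos, by rw [e1]; norm_num⟩
      · exact ⟨4, by norm_num, by rw [e4]; norm_num⟩
      · exact ⟨4, by norm_num, by rw [e4]; norm_num⟩
      · exact ⟨9, by norm_num, by rw [e9]; norm_num⟩
    · refine ⟨30, by norm_num, ?_⟩
      rw [e30]
      push_cast
      have h5Z : (5:ℤ) ≤ m := by exact_mod_cast h5
      have h26Z : (m:ℤ) ≤ 26 := by
        have : m ≤ 26 := by omega
        exact_mod_cast this
      nlinarith [mul_nonneg (sub_nonneg.mpr h5Z) (sub_nonneg.mpr h26Z)]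

/-- `IsS m S` says that `S` is the maximum of `{k*m - p_k : k ≥ 1}`. -/
def IsS (m : ℕ) (S : ℤ) : Prop :=
  IsGreatest {a : ℤ | ∃ k : ℕ, 0 < k ∧ a = (k : ℤ) * m - nthPrime k} S

theorem stmt8 (m : ℕ) (hm : 0 < m) (S : ℤ) (hS : IsS m S) :
    (m : ℤ) ^ 2 - m - 1 ≤ S ∧
      ∃ k : ℕ, 0 < k ∧ (m : ℤ) ^ 2 - m - 1 ≤ (k : ℤ) * m - nthPrime k := by
  obtain ⟨k, hk, hkb⟩ := key m hm
  exact ⟨le_trans hkb (hS.2 ⟨k, hk, rfl⟩), k, hk, hkb⟩
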